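/- For n > 1, the number of monogenic submonoids of T_n up to isomorphism equals ∑_{k=1}^{n} s(k), where s(k) denotes the number of non-isomorphic cyclic subgroups of S_k (equivalently, the number of distinct orders of elements of S_k). -/

import Mathlib

/-- The number of distinct orders of elements of the symmetric group on k points. -/
noncomputable def numOrders (k : ℕ) : ℕ :=
  (Finset.univ.image fun g : Equiv.Perm (Fin k) => orderOf g).card

/-- Monogenic submonoids of `T_n`, up to monoid isomorphism. -/
def monogenicSetoid (n : ℕ) :
    Setoid {N : Submonoid (Function.End (Fin n)) // ∃ a, N = Submonoid.closure {a}} where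
  r M N := Nonempty (↥M.1 ≃* ↥N.1)
  iseqv := ⟨fun _ => ⟨MulEquiv.refl _⟩, fun ⟨e⟩ => ⟨e.symm⟩, fun ⟨e⟩ ⟨e'⟩ => ⟨e.trans e'⟩⟩

namespace Monogenic

attribute [local instance] Classical.propDecidable

instance {n : ℕ} : Finite (Function.End (Fin n)) := inferInstanceAs (Finite (Fin n → Fin n))

section Chunk0



variable {M : Type*} [Monoid M] [Finite M]

lemma exists_idx (a : M) : ∃ m, ∃ r, 0 < r ∧ a ^ (m + r) = a ^ m := by
  obtain ⟨i, j, hne, hij⟩ := Finite.exists_ne_map_eq_of_infinite (fun k : ℕ => a ^ k)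
  rcases hne.lt_or_gt with h | h
  · exact ⟨i, j - i, by omega, by simpa [Nat.add_sub_cancel' h.le] using hij.symm⟩
  · exact ⟨j, i - j, by omega, by simpa [Nat.add_sub_cancel' h.le] using hij⟩

noncomputable def idx (a : M) : ℕ := Nat.find (exists_idx a)

lemma exists_per (a : M) : ∃ r, 0 < r ∧ a ^ (idx a + r) = a ^ idx a :=
  Nat.find_spec (exists_idx a)

noncomputable def per (a : M) : ℕ := Nat.find (exists_per a)

lemma per_pos (a : M) : 0 < per a := (Nat.find_spec (exists_per a)).1

lemma pow_idx_add_per (a : M) : a ^ (idx a + per a) = a ^ idx a :=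
  (Nat.find_spec (exists_per a)).2

lemma idx_le {a : M} {m : ℕ} (h : ∃ r, 0 < r ∧ a ^ (m + r) = a ^ m) : idx a ≤ m :=
  Nat.find_le h

lemma per_le {a : M} {r : ℕ} (h : 0 < r ∧ a ^ (idx a + r) = a ^ idx a) : per a ≤ r :=
  Nat.find_le h

lemma idx_spec {a : M} {m : ℕ} (h : m < idx a) : ¬ ∃ r, 0 < r ∧ a ^ (m + r) = a ^ m :=
  Nat.find_min (exists_idx a) h

lemma per_spec {a : M} {r : ℕ} (h : r < per a) : ¬ (0 < r ∧ a ^ (idx a + r) = a ^ idx a) :=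
  Nat.find_min (exists_per a) h

lemma pow_add_mul_per (a : M) {k : ℕ} (hk : idx a ≤ k) (t : ℕ) :
    a ^ (k + t * per a) = a ^ k := by
  induction t with
  | zero => simp
  | succ t ih =>
    have h1 : k + (t + 1) * per a = (idx a + per a) + (k - idx a + t * per a) := by
      rw [Nat.succ_mul]; omega
    rw [h1, pow_add, pow_idx_add_per, ← pow_add]
    have h2 : idx a + (k - idx a + t * per a) = k + t * per a := by omega
    rw [h2, ih]

lemma idx_le_of_pow_eq {a : M} {i j : ℕ} (hij : i < j) (h : a ^ i = a ^ j) : idx a ≤ i :=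
  idx_le ⟨j - i, by omega, by rw [Nat.add_sub_cancel' hij.le]; exact h.symm⟩

lemma per_dvd_of_pow_eq {a : M} {s d : ℕ} (hs : idx a ≤ s) (hd : 0 < d)
    (h : a ^ (s + d) = a ^ s) : per a ∣ d := by
  set r := per a with hr
  have hrpos := per_pos a
  set ρ := d % r with hρ
  have hmd : ρ + d / r * r = d := Nat.mod_add_div' d r
  have hsr : s ≤ s * r := Nat.le_mul_of_pos_right s hrpos
  set u := idx a + s * r with hu
  have husge : s ≤ u := by omega
  have h1 : a ^ (u + d) = a ^ u := by
    have e : a ^ (u + d) = a ^ (u - s) * a ^ (s + d) := by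
      rw [← pow_add]; congr 1; omega
    rw [e, h, ← pow_add]; congr 1; omega
  have h2 : a ^ (u + ρ) = a ^ (u + d) := by
    have e : u + d = (u + ρ) + (d / r) * r := by omega
    rw [e, pow_add_mul_per a (by omega)]
  have h3 : a ^ (idx a + ρ) = a ^ idx a := by
    have e1 : a ^ (u + ρ) = a ^ (idx a + ρ) := by
      have e : u + ρ = (idx a + ρ) + s * r := by omega
      rw [e, pow_add_mul_per a (by omega)]
    have e2 : a ^ u = a ^ idx a := pow_add_mul_per a le_rfl s
    rw [← e1, h2, h1, e2]
  by_contra hnd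
  have hρpos : 0 < ρ := Nat.pos_of_ne_zero (fun h0 => hnd (Nat.dvd_of_mod_eq_zero h0))
  have hlt : ρ < r := Nat.mod_lt _ hrpos
  exact absurd ⟨hρpos, h3⟩ (per_spec hlt)

lemma pow_eq_pow_iff {a : M} {i j : ℕ} (hij : i ≤ j) :
    a ^ i = a ^ j ↔ i = j ∨ (idx a ≤ i ∧ per a ∣ j - i) := by
  constructor
  · intro h
    rcases eq_or_lt_of_le hij with h' | h'
    · exact Or.inl h'
    · exact Or.inr ⟨idx_le_of_pow_eq h' h,
        per_dvd_of_pow_eq (idx_le_of_pow_eq h' h) (by omega)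
          (by rw [Nat.add_sub_cancel' hij]; exact h.symm)⟩
  · rintro (rfl | ⟨hi, t, ht⟩)
    · rfl
    · rw [mul_comm] at ht
      have e : j = i + t * per a := by omega
      rw [e, pow_add_mul_per a hi]

lemma exists_pow_lt (a : M) (k : ℕ) : ∃ i, i < idx a + per a ∧ a ^ i = a ^ k := by
  rcases lt_or_ge k (idx a + per a) with h | h
  · exact ⟨k, h, rfl⟩
  · have hmd : (k - idx a) % per a + (k - idx a) / per a * per a = k - idx a :=
      Nat.mod_add_div' _ _
    refine ⟨idx a + (k - idx a) % per a,
      by have := Nat.mod_lt (k - idx a) (per_pos a); omega, ?_⟩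
    have e : k = (idx a + (k - idx a) % per a) + ((k - idx a) / per a) * per a := by omega
    conv_rhs => rw [e]
    rw [pow_add_mul_per a (by omega)]

end Chunk0

section Chunk1



variable {M : Type*} [Monoid M] [Finite M]

section Closure

variable (a : M)

lemma pow_mem_closure (k : ℕ) : a ^ k ∈ Submonoid.closure ({a} : Set M) :=
  Submonoid.mem_closure_singleton.2 ⟨k, rfl⟩

noncomputable def enum : Fin (idx a + per a) → ↥(Submonoid.closure ({a} : Set M)) :=
  fun i => ⟨a ^ (i : ℕ), pow_mem_closure a _⟩

lemma pow_eq_pow_iff' {i j : ℕ} (hij : i ≤ j) (hj : j < idx a + per a) :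
    a ^ i = a ^ j ↔ i = j := by
  rw [pow_eq_pow_iff hij]
  constructor
  · rintro (h | ⟨h1, h2⟩)
    · exact h
    · rcases Nat.eq_zero_or_pos (j - i) with h3 | h3
      · omega
      · have := Nat.le_of_dvd h3 h2; omega
  · exact Or.inl

lemma enum_bijective : Function.Bijective (enum a) := by
  constructor
  · rintro ⟨i, hi⟩ ⟨j, hj⟩ h
    have h' : a ^ i = a ^ j := congrArg Subtype.val h
    rcases le_or_gt i j with hle | hlt
    · exact Fin.ext ((pow_eq_pow_iff' a hle hj).1 h')
    · exact Fin.ext ((pow_eq_pow_iff' a hlt.le hi).1 h'.symm).symm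
  · rintro ⟨x, hx⟩
    obtain ⟨k, rfl⟩ := Submonoid.mem_closure_singleton.1 hx
    obtain ⟨i, hi, hik⟩ := exists_pow_lt a k
    exact ⟨⟨i, hi⟩, Subtype.ext hik⟩

lemma card_closure : Nat.card ↥(Submonoid.closure ({a} : Set M)) = idx a + per a := by
  rw [← Nat.card_eq_of_bijective _ (enum_bijective a), Nat.card_eq_fintype_card,
    Fintype.card_fin]

lemma per_dvd_factorial : per a ∣ Nat.factorial (idx a + per a) :=
  Nat.dvd_factorial (per_pos a) (by omega)

lemma isUnit_iff (x : ↥(Submonoid.closure ({a} : Set M))) :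
    IsUnit x ↔ (idx a = 0 ∨ x = 1) := by
  obtain ⟨i, hi⟩ := Submonoid.mem_closure_singleton.1 x.2
  constructor
  · rintro ⟨u, hu⟩
    by_cases h0 : idx a = 0
    · exact Or.inl h0
    · right
      obtain ⟨j, hj⟩ := Submonoid.mem_closure_singleton.1 (u⁻¹ : Units _).1.2
      have hmul : (u : ↥(Submonoid.closure ({a} : Set M))) * (u⁻¹ : Units _).1 = 1 :=
        u.mul_inv
      rw [hu] at hmul
      have hc : a ^ (i + j) = a ^ 0 := by
        have h2 := congrArg Subtype.val hmul
        push_cast at h2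
        rw [pow_add, hi, hj]
        simpa using h2
      rcases (pow_eq_pow_iff (Nat.zero_le _)).1 hc.symm with h1 | ⟨h1, _⟩
      · have hi0 : i = 0 := by omega
        apply Subtype.ext
        rw [← hi, hi0, pow_zero, OneMemClass.coe_one]
      · omega
  · rintro (h0 | rfl)
    · set F := Nat.factorial (idx a + per a) with hF
      have hF1 : 1 ≤ F := Nat.one_le_iff_ne_zero.2 (Nat.factorial_ne_zero _)
      set w := i * (F - 1) with hw
      have hiw : i + w = i * F := by
        have e : i * F = i * (F - 1 + 1) := by rw [Nat.sub_add_cancel hF1]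
        rw [Nat.mul_add, mul_one] at e
        omega
      have hdvd : per a ∣ i * F := Dvd.dvd.mul_left (per_dvd_factorial a) i
      have hpow : a ^ (i + w) = a ^ 0 := by
        refine ((pow_eq_pow_iff (Nat.zero_le _)).2 (Or.inr ⟨by omega, ?_⟩)).symm
        simpa [hiw] using hdvd
      have h1 : x * ⟨a ^ w, pow_mem_closure a w⟩ = 1 := by
        apply Subtype.ext
        push_cast
        rw [← hi, ← pow_add]
        simpa using hpow
      have h2 : (⟨a ^ w, pow_mem_closure a w⟩ : ↥(Submonoid.closure ({a} : Set M))) * x = 1 := by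
        apply Subtype.ext
        push_cast
        rw [← hi, ← pow_add, Nat.add_comm w i]
        simpa using hpow
      exact ⟨⟨x, ⟨a ^ w, pow_mem_closure a w⟩, h1, h2⟩, rfl⟩
    · exact isUnit_one

lemma card_units_closure :
    Nat.card {x : ↥(Submonoid.closure ({a} : Set M)) // IsUnit x} =
      if idx a = 0 then idx a + per a else 1 := by
  split_ifs with h0
  · rw [Nat.card_congr (Equiv.subtypeUnivEquiv (fun x => (isUnit_iff a x).2 (Or.inl h0)))]
    exact card_closure a
  · have hsub : Subsingleton {x : ↥(Submonoid.closure ({a} : Set M)) // IsUnit x} := by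
      constructor
      rintro ⟨x, hx⟩ ⟨y, hy⟩
      have hx1 := (isUnit_iff a x).1 hx
      have hy1 := (isUnit_iff a y).1 hy
      apply Subtype.ext
      rcases hx1 with h | h
      · exact absurd h h0
      · rcases hy1 with h' | h'
        · exact absurd h' h0
        · exact h.trans h'.symm
    have hne : Nonempty {x : ↥(Submonoid.closure ({a} : Set M)) // IsUnit x} :=
      ⟨⟨1, isUnit_one⟩⟩
    exact Nat.card_unique

lemma mem_gset_iff (x : ↥(Submonoid.closure ({a} : Set M))) {i : ℕ} (hi : a ^ i = x)
    (L : ℕ) (hL : per a ∣ L) (hL1 : 1 ≤ L) :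
    x ^ (L + 1) = x ↔ (i = 0 ∨ idx a ≤ i) := by
  have hcoe : ((x ^ (L + 1) : ↥(Submonoid.closure ({a} : Set M))) : M) = a ^ (i * (L + 1)) := by
    rw [SubmonoidClass.coe_pow, ← hi, ← pow_mul]
  have hiff : x ^ (L + 1) = x ↔ a ^ (i * (L + 1)) = a ^ i := by
    constructor
    · intro h
      have := congrArg Subtype.val h
      rw [hcoe] at this
      rw [this, hi]
    · intro h
      apply Subtype.ext
      rw [hcoe, h, hi]
  rw [hiff]
  rcases Nat.eq_zero_or_pos i with rfl | hipos
  · simp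
  · have hle : i ≤ i * (L + 1) := Nat.le_mul_of_pos_right i (by omega)
    rw [show a ^ (i * (L + 1)) = a ^ i ↔ a ^ i = a ^ (i * (L + 1)) from eq_comm,
      pow_eq_pow_iff hle]
    constructor
    · rintro (h | ⟨h1, h2⟩)
      · have : i * (L + 1) = i * 1 := by omega
        have := Nat.eq_of_mul_eq_mul_left hipos this
        omega
      · exact Or.inr h1
    · rintro (h | h)
      · omega
      · refine Or.inr ⟨h, ?_⟩
        have : i * (L + 1) - i = i * L := by rw [Nat.mul_add]; omega
        rw [this]
        exact Dvd.dvd.mul_left hL i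

noncomputable def genum : Fin (per a + 1) → ↥(Submonoid.closure ({a} : Set M)) :=
  fun i => if (i : ℕ) = 0 then 1 else ⟨a ^ (idx a + ((i : ℕ) - 1)), pow_mem_closure a _⟩

lemma card_gset_closure (L : ℕ) (hL : per a ∣ L) (hL1 : 1 ≤ L) :
    Nat.card {x : ↥(Submonoid.closure ({a} : Set M)) // x ^ (L + 1) = x} =
      if idx a = 0 then per a else per a + 1 := by
  split_ifs with h0
  · have hall : ∀ x : ↥(Submonoid.closure ({a} : Set M)), x ^ (L + 1) = x := by
      intro x
      obtain ⟨i, hi⟩ := Submonoid.mem_closure_singleton.1 x.2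
      rw [mem_gset_iff a x hi L hL hL1]
      omega
    rw [Nat.card_congr (Equiv.subtypeUnivEquiv hall), card_closure, h0, Nat.zero_add]
  · have h0' : 1 ≤ idx a := by omega
    have hmem : ∀ i : Fin (per a + 1), (genum a i) ^ (L + 1) = genum a i := by
      intro i
      rcases Nat.eq_zero_or_pos (i : ℕ) with h | h
      · simp [genum, h]
      · have : ¬ ((i : ℕ) = 0) := by omega
        simp only [genum, this, if_false]
        rw [mem_gset_iff a _ rfl L hL hL1]
        omega
    have hbij : Function.Bijective (fun i => (⟨genum a i, hmem i⟩ :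
        {x : ↥(Submonoid.closure ({a} : Set M)) // x ^ (L + 1) = x})) := by
      constructor
      · intro i j h
        have h' : genum a i = genum a j := congrArg Subtype.val h
        apply Fin.ext
        simp only [genum] at h'
        rcases Nat.eq_zero_or_pos (i : ℕ) with hi0 | hi0 <;>
          rcases Nat.eq_zero_or_pos (j : ℕ) with hj0 | hj0
        · omega
        · exfalso
          rw [if_pos hi0, if_neg (by omega)] at h'
          have h'' : a ^ 0 = a ^ (idx a + ((j : ℕ) - 1)) := by
            have h3 := congrArg Subtype.val h'
            push_cast at h3
            simpa using h3
          rcases (pow_eq_pow_iff (Nat.zero_le _)).1 h'' with h1 | ⟨h1, _⟩ <;> omega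
        · exfalso
          rw [if_neg (by omega), if_pos hj0] at h'
          have h'' : a ^ 0 = a ^ (idx a + ((i : ℕ) - 1)) := by
            have h3 := congrArg Subtype.val h'
            push_cast at h3
            simpa using h3.symm
          rcases (pow_eq_pow_iff (Nat.zero_le _)).1 h'' with h1 | ⟨h1, _⟩ <;> omega
        · rw [if_neg (by omega), if_neg (by omega)] at h'
          have h'' : a ^ (idx a + ((i : ℕ) - 1)) = a ^ (idx a + ((j : ℕ) - 1)) := by
            have h3 := congrArg Subtype.val h'
            simpa using h3
          have hilt := i.isLt
          have hjlt := j.isLt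
          rcases le_or_gt (i : ℕ) (j : ℕ) with hle | hlt
          · have := (pow_eq_pow_iff' a (i := idx a + ((i : ℕ) - 1)) (j := idx a + ((j : ℕ) - 1))
              (by omega) (by omega)).1 h''
            omega
          · have := (pow_eq_pow_iff' a (i := idx a + ((j : ℕ) - 1)) (j := idx a + ((i : ℕ) - 1))
              (by omega) (by omega)).1 h''.symm
            omega
      · rintro ⟨x, hx⟩
        obtain ⟨i, hi⟩ := Submonoid.mem_closure_singleton.1 x.2
        rcases (mem_gset_iff a x hi L hL hL1).1 hx with h | h
        · refine ⟨⟨0, by omega⟩, ?_⟩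
          apply Subtype.ext
          simp only [genum]
          simp only [Fin.val_mk, if_true]
          apply Subtype.ext
          rw [← hi, h, pow_zero, OneMemClass.coe_one]
        · -- i ≥ idx a; reduce i to idx a + (i - idx a) % per a
          have hmod := Nat.mod_lt (i - idx a) (per_pos a)
          have hmd : (i - idx a) % per a + (i - idx a) / per a * per a = i - idx a :=
            Nat.mod_add_div' _ _
          refine ⟨⟨(i - idx a) % per a + 1, by omega⟩, ?_⟩
          apply Subtype.ext
          simp only [genum]
          rw [if_neg (by simp)]
          apply Subtype.ext
          push_cast
          rw [← hi]
          refine (pow_eq_pow_iff (by omega)).2 (Or.inr ⟨by omega, ?_⟩)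
          refine ⟨(i - idx a) / per a, ?_⟩
          rw [mul_comm]
          omega
    rw [← Nat.card_eq_of_bijective _ hbij, Nat.card_eq_fintype_card, Fintype.card_fin]

end Closure

end Chunk1

section Chunk2



variable {M : Type*} [Monoid M] [Finite M] {N : Type*} [Monoid N] [Finite N]

/-- Abstract "period" of a finite monoid, an isomorphism invariant. -/
noncomputable def perAbs (T : Type*) [Monoid T] : ℕ :=
  if Nat.card {x : T // IsUnit x} = Nat.card T then Nat.card T
  else Nat.card {x : T // x ^ (Nat.factorial (Nat.card T) + 1) = x} - 1

/-- Abstract "index". -/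
noncomputable def idxAbs (T : Type*) [Monoid T] : ℕ := Nat.card T - perAbs T

lemma perAbs_congr {T S : Type*} [Monoid T] [Monoid S] (e : T ≃* S) : perAbs T = perAbs S := by
  have hcard : Nat.card T = Nat.card S := Nat.card_congr e.toEquiv
  have hunit : Nat.card {x : T // IsUnit x} = Nat.card {x : S // IsUnit x} := by
    refine Nat.card_congr (Equiv.subtypeEquiv e.toEquiv (fun x => ?_))
    constructor
    · intro h; exact h.map e.toMonoidHom
    · intro h
      have := h.map e.symm.toMonoidHom
      simpa using this
  have hgset : Nat.card {x : T // x ^ (Nat.factorial (Nat.card T) + 1) = x} =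
      Nat.card {x : S // x ^ (Nat.factorial (Nat.card S) + 1) = x} := by
    rw [← hcard]
    refine Nat.card_congr (Equiv.subtypeEquiv e.toEquiv (fun x => ?_))
    constructor
    · intro h
      show (e x) ^ _ = e x
      rw [← map_pow, h]
    · intro h
      apply e.injective
      rw [map_pow]
      exact h
  unfold perAbs
  rw [hgset, hunit, hcard]

lemma idxAbs_congr {T S : Type*} [Monoid T] [Monoid S] (e : T ≃* S) : idxAbs T = idxAbs S := by
  unfold idxAbs
  rw [perAbs_congr e, Nat.card_congr e.toEquiv]

lemma perAbs_closure (a : M) : perAbs ↥(Submonoid.closure ({a} : Set M)) = per a := by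
  unfold perAbs
  rw [card_units_closure, card_closure,
    card_gset_closure a _ (per_dvd_factorial a)
      (Nat.one_le_iff_ne_zero.2 (Nat.factorial_ne_zero _))]
  rcases Nat.eq_zero_or_pos (idx a) with h0 | h0
  · rw [if_pos h0, if_pos h0, if_pos rfl, h0, Nat.zero_add]
  · have h1 : ¬ idx a = 0 := by omega
    rw [if_neg h1, if_neg h1, if_neg (by have := per_pos a; omega)]
    omega

lemma idxAbs_closure (a : M) : idxAbs ↥(Submonoid.closure ({a} : Set M)) = idx a := by
  unfold idxAbs
  rw [perAbs_closure, card_closure]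
  omega

section Iso

variable {a : M} {b : N}

lemma pow_transfer (h1 : idx a = idx b) (h2 : per a = per b) :
    ∀ i j : ℕ, a ^ i = a ^ j → b ^ i = b ^ j := by
  intro i j h
  rcases le_or_gt i j with hle | hlt
  · rcases (pow_eq_pow_iff hle).1 h with h' | ⟨ha, hb⟩
    · rw [h']
    · exact (pow_eq_pow_iff hle).2 (Or.inr ⟨h1 ▸ ha, h2 ▸ hb⟩)
  · rcases (pow_eq_pow_iff hlt.le).1 h.symm with h' | ⟨ha, hb⟩
    · rw [h']
    · exact ((pow_eq_pow_iff hlt.le).2 (Or.inr ⟨h1 ▸ ha, h2 ▸ hb⟩)).symm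

noncomputable def rep (x : ↥(Submonoid.closure ({a} : Set M))) : ℕ :=
  Classical.choose (Submonoid.mem_closure_singleton.1 x.2)

lemma rep_spec (x : ↥(Submonoid.closure ({a} : Set M))) : a ^ rep x = (x : M) :=
  Classical.choose_spec (Submonoid.mem_closure_singleton.1 x.2)

noncomputable def transferFun (b : N) (x : ↥(Submonoid.closure ({a} : Set M))) :
    ↥(Submonoid.closure ({b} : Set N)) :=
  ⟨b ^ rep x, pow_mem_closure b _⟩

lemma transferFun_pow (h1 : idx a = idx b) (h2 : per a = per b) (i : ℕ) :
    transferFun b (⟨a ^ i, pow_mem_closure a i⟩ : ↥(Submonoid.closure ({a} : Set M))) =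
      ⟨b ^ i, pow_mem_closure b i⟩ := by
  apply Subtype.ext
  show b ^ rep _ = b ^ i
  exact pow_transfer h1 h2 _ _ (rep_spec ⟨a ^ i, pow_mem_closure a i⟩)

lemma transferFun_pow' (h1 : idx a = idx b) (h2 : per a = per b) (i : ℕ)
    (hm : a ^ i ∈ Submonoid.closure ({a} : Set M)) :
    transferFun b (⟨a ^ i, hm⟩ : ↥(Submonoid.closure ({a} : Set M))) =
      ⟨b ^ i, pow_mem_closure b i⟩ :=
  transferFun_pow h1 h2 i

noncomputable def closureIso (h1 : idx a = idx b) (h2 : per a = per b) :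
    ↥(Submonoid.closure ({a} : Set M)) ≃* ↥(Submonoid.closure ({b} : Set N)) where
  toFun := transferFun b
  invFun := transferFun a
  left_inv := by
    rintro ⟨x, hx⟩
    obtain ⟨i, rfl⟩ := Submonoid.mem_closure_singleton.1 hx
    rw [transferFun_pow' h1 h2, transferFun_pow' h1.symm h2.symm]
  right_inv := by
    rintro ⟨x, hx⟩
    obtain ⟨i, rfl⟩ := Submonoid.mem_closure_singleton.1 hx
    rw [transferFun_pow' h1.symm h2.symm, transferFun_pow' h1 h2]
  map_mul' := by
    rintro ⟨x, hx⟩ ⟨y, hy⟩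
    obtain ⟨i, rfl⟩ := Submonoid.mem_closure_singleton.1 hx
    obtain ⟨j, rfl⟩ := Submonoid.mem_closure_singleton.1 hy
    show transferFun b (⟨a ^ i, hx⟩ * ⟨a ^ j, hy⟩) =
      transferFun b ⟨a ^ i, hx⟩ * transferFun b ⟨a ^ j, hy⟩
    have hmul : (⟨a ^ i, hx⟩ : ↥(Submonoid.closure ({a} : Set M))) * ⟨a ^ j, hy⟩ =
        ⟨a ^ (i + j), pow_mem_closure a _⟩ := by
      apply Subtype.ext
      push_cast
      rw [pow_add]
    rw [hmul, transferFun_pow' h1 h2, transferFun_pow' h1 h2, transferFun_pow' h1 h2]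
    apply Subtype.ext
    push_cast
    rw [pow_add]

end Iso

end Chunk2

section Chunk3



variable {n : ℕ}


section EndFin

variable (a : Function.End (Fin n))

/-- Range of the `k`-th power, as a set. -/
def rng (k : ℕ) : Set (Fin n) := Set.range ((a ^ k : Function.End (Fin n)) : Fin n → Fin n)

lemma pow_succ_apply (k : ℕ) (x : Fin n) : (a ^ (k + 1)) x = (a ^ k) (a x) := by
  rw [pow_succ]; rfl

lemma pow_add_apply (k l : ℕ) (x : Fin n) : (a ^ (k + l)) x = (a ^ k) ((a ^ l) x) := by
  rw [pow_add]; rfl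

lemma pow_succ_apply' (k : ℕ) (x : Fin n) : (a ^ (k + 1)) x = a ((a ^ k) x) := by
  rw [pow_succ']; rfl

lemma mem_rng {k : ℕ} {x : Fin n} : x ∈ rng a k ↔ ∃ y, (a ^ k) y = x := Iff.rfl

lemma rng_succ_subset (k : ℕ) : rng a (k + 1) ⊆ rng a k := by
  rintro x ⟨y, rfl⟩
  exact ⟨a y, (pow_succ_apply a k y).symm⟩

lemma rng_mono {k l : ℕ} (h : k ≤ l) : rng a l ⊆ rng a k := by
  induction l with
  | zero => have h0 : k = 0 := by omega
            subst h0; exact subset_rfl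
  | succ l ih =>
    rcases Nat.eq_or_lt_of_le h with rfl | h'
    · exact subset_rfl
    · exact (rng_succ_subset a l).trans (ih (by omega))

section Stable

variable {a} {k : ℕ}

noncomputable def stabPerm (hst : rng a (k + 1) = rng a k) : Equiv.Perm ↥(rng a k) := by
  refine Equiv.ofBijective (fun x => ⟨a x.1, ?_⟩) ?_
  · obtain ⟨y, hy⟩ := x.2
    have hmem : a x.1 ∈ rng a (k + 1) := ⟨y, by rw [pow_succ_apply' a k y, hy]⟩
    exact rng_succ_subset a k hmem
  · rw [Fintype.bijective_iff_surjective_and_card]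
    refine ⟨?_, rfl⟩
    rintro ⟨x, hx⟩
    rw [← hst] at hx
    obtain ⟨y, hy⟩ := hx
    refine ⟨⟨(a ^ k) y, ⟨y, rfl⟩⟩, ?_⟩
    apply Subtype.ext
    show a ((a ^ k) y) = x
    rw [← pow_succ_apply' a k y]
    exact hy

lemma stabPerm_apply (hst : rng a (k + 1) = rng a k) (z : ↥(rng a k)) : ((stabPerm hst) z : Fin n) = a (z : Fin n) := rfl

lemma stabPerm_pow (hst : rng a (k + 1) = rng a k) (t : ℕ) (z : ↥(rng a k)) :
    (((stabPerm hst) ^ t) z : Fin n) = (a ^ t) (z : Fin n) := by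
  induction t with
  | zero => rfl
  | succ t ih =>
    rw [pow_succ', Equiv.Perm.mul_apply, pow_succ_apply' a t, ← ih]
    exact (stabPerm_apply hst _).symm ▸ rfl

lemma idx_le_of_stable (hst : rng a (k + 1) = rng a k) : idx a ≤ k := by
  set τ := stabPerm hst
  have hord : 0 < orderOf τ := orderOf_pos τ
  refine idx_le ⟨orderOf τ, hord, ?_⟩
  funext x
  have h1 : k + orderOf τ = orderOf τ + k := by omega
  rw [h1, pow_add_apply]
  have h2 := stabPerm_pow hst (orderOf τ) ⟨(a ^ k) x, ⟨x, rfl⟩⟩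
  rw [pow_orderOf_eq_one] at h2
  exact h2.symm

end Stable

lemma rng_stable_at_idx : rng a (idx a + 1) = rng a (idx a) := by
  apply Set.Subset.antisymm (rng_succ_subset a _)
  have h1 : rng a (idx a + per a) = rng a (idx a) := by
    unfold rng; rw [pow_idx_add_per]
  rw [← h1]
  exact rng_mono a (by have := per_pos a; omega)

lemma rng_zero : rng a 0 = Set.univ := by
  ext x
  simp only [Set.mem_univ, iff_true]
  exact ⟨x, rfl⟩

lemma rng_ncard_le : ∀ k, k ≤ idx a → (rng a k).ncard ≤ n - k := by
  intro k
  induction k with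
  | zero =>
    intro _
    rw [rng_zero, Set.ncard_univ, Nat.card_eq_fintype_card, Fintype.card_fin]
    omega
  | succ k ih =>
    intro hk
    have hk' : k < idx a := by omega
    have hne : rng a (k + 1) ≠ rng a k := fun h => by
      have := idx_le_of_stable h; omega
    have hssub : rng a (k + 1) ⊂ rng a k :=
      Set.ssubset_iff_subset_ne.2 ⟨rng_succ_subset a k, hne⟩
    have := Set.ncard_lt_ncard hssub (Set.toFinite _)
    have := ih (by omega)
    omega

lemma rng_nonempty (hn : 1 ≤ n) (k : ℕ) : (rng a k).Nonempty := by
  have : Nonempty (Fin n) := ⟨⟨0, by omega⟩⟩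
  obtain ⟨x⟩ := this
  exact ⟨(a ^ k) x, ⟨x, rfl⟩⟩

lemma idx_add_one_le (hn : 1 ≤ n) : idx a + 1 ≤ n := by
  have h1 := rng_ncard_le a (idx a) le_rfl
  have h2 : 0 < (rng a (idx a)).ncard :=
    (Set.ncard_pos (Set.toFinite _)).2 (rng_nonempty a hn _)
  omega

lemma exists_perm_orderOf (hn : 1 ≤ n) :
    ∃ σ : Equiv.Perm (Fin (n - idx a)), orderOf σ = per a := by
  have hst : rng a (idx a + 1) = rng a (idx a) := rng_stable_at_idx a
  set τ := stabPerm hst with hτ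
  have hτord : orderOf τ = per a := by
    have hdvd1 : τ ^ per a = 1 := by
      apply Equiv.ext
      intro z
      apply Subtype.ext
      rw [Equiv.Perm.one_apply, hτ, stabPerm_pow hst (per a) z]
      obtain ⟨y, hy⟩ := z.2
      rw [← hy, ← pow_add_apply, Nat.add_comm, pow_idx_add_per]
    have hdvd2 : per a ≤ orderOf τ := by
      refine per_le ⟨orderOf_pos τ, ?_⟩
      funext x
      rw [Nat.add_comm, pow_add_apply]
      have h2 := stabPerm_pow hst (orderOf τ) ⟨(a ^ idx a) x, ⟨x, rfl⟩⟩
      rw [pow_orderOf_eq_one] at h2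
      rw [← h2]
      rfl
    have h3 : orderOf τ ∣ per a := orderOf_dvd_of_pow_eq_one hdvd1
    have h4 := Nat.le_of_dvd (per_pos a) h3
    omega
  have hcard : Fintype.card ↥(rng a (idx a)) ≤ Fintype.card (Fin (n - idx a)) := by
    rw [Fintype.card_fin, ← Nat.card_eq_fintype_card, Nat.card_coe_set_eq]
    exact rng_ncard_le a (idx a) le_rfl
  obtain ⟨f⟩ := Function.Embedding.nonempty_of_card_le hcard
  refine ⟨Equiv.Perm.viaEmbeddingHom f τ, ?_⟩
  rw [orderOf_injective (Equiv.Perm.viaEmbeddingHom f)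
    (Equiv.Perm.viaEmbeddingHom_injective f) τ, hτord]

end EndFin

end Chunk3

section Chunk4



variable {n : ℕ}


section Build

variable {k : ℕ}

/-- The transformation with a permutation part `σ` on `{0,...,k-1}` and a descending
chain on `{k,...,n-1}`. -/
def build (hkn : k ≤ n) (σ : Equiv.Perm (Fin k)) : Function.End (Fin n) :=
  fun i => if h : (i : ℕ) < k then Fin.castLE hkn (σ ⟨i, h⟩) else ⟨(i : ℕ) - 1, by omega⟩

variable (hkn : k ≤ n) (σ : Equiv.Perm (Fin k))

lemma build_apply_lt (x : Fin n) (h : (x : ℕ) < k) :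
    build hkn σ x = Fin.castLE hkn (σ ⟨x, h⟩) := dif_pos h

lemma build_apply_ge (x : Fin n) (h : ¬ (x : ℕ) < k) :
    build hkn σ x = ⟨(x : ℕ) - 1, by omega⟩ := dif_neg h

lemma build_pow_lt (t : ℕ) (x : Fin n) (h : (x : ℕ) < k) :
    ((build hkn σ) ^ t) x = Fin.castLE hkn ((σ ^ t) ⟨x, h⟩) := by
  induction t generalizing x h with
  | zero =>
    rw [pow_zero, pow_zero]
    apply Fin.ext
    simp [Function.End.one_def]
  | succ t ih =>
    rw [pow_succ_apply, build_apply_lt hkn σ x h]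
    have h' : ((Fin.castLE hkn (σ ⟨x, h⟩) : Fin n) : ℕ) < k := (σ ⟨x, h⟩).2
    rw [ih _ h']
    have harg : (⟨((Fin.castLE hkn (σ ⟨x, h⟩) : Fin n) : ℕ), h'⟩ : Fin k) = σ ⟨x, h⟩ :=
      Fin.ext (by simp)
    rw [harg, pow_succ, Equiv.Perm.mul_apply]

lemma build_pow_ge (t : ℕ) (x : Fin n) (h : k ≤ (x : ℕ) - t) :
    ((build hkn σ) ^ t) x = ⟨(x : ℕ) - t, by omega⟩ := by
  induction t with
  | zero =>
    rw [pow_zero]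
    apply Fin.ext
    simp [Function.End.one_def]
  | succ t ih =>
    rw [pow_succ_apply' (build hkn σ) t x, ih (by omega)]
    rw [build_apply_ge hkn σ _ (by simp; omega)]
    apply Fin.ext
    simp
    omega

lemma build_pow_chain (hk : 1 ≤ k) (t : ℕ) (x : Fin n) (hx : k ≤ (x : ℕ)) (ht : (x : ℕ) - k + 1 ≤ t) :
    ((build hkn σ) ^ t) x =
      Fin.castLE hkn ((σ ^ (t - ((x : ℕ) - k + 1))) ⟨k - 1, by omega⟩) := by
  set s := t - ((x : ℕ) - k + 1) with hs
  have ht' : t = s + ((x : ℕ) - k + 1) := by omega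
  rw [ht', pow_add_apply]
  have h1 : ((build hkn σ) ^ ((x : ℕ) - k + 1)) x = ⟨k - 1, by omega⟩ := by
    rw [pow_succ_apply' (build hkn σ) ((x : ℕ) - k) x,
      build_pow_ge hkn σ _ _ (by omega)]
    rw [build_apply_ge hkn σ _ (by simp; omega)]
    apply Fin.ext
    simp
    omega
  rw [h1, build_pow_lt hkn σ s _ (by simp; omega)]

lemma build_pow_stab (hk : 1 ≤ k) :
    (build hkn σ) ^ (n - k + orderOf σ) = (build hkn σ) ^ (n - k) := by
  funext x
  by_cases h : (x : ℕ) < k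
  · rw [build_pow_lt hkn σ _ x h, build_pow_lt hkn σ _ x h, pow_add, pow_orderOf_eq_one,
      mul_one]
  · have hx : k ≤ (x : ℕ) := by omega
    have hxn : (x : ℕ) < n := x.2
    rw [build_pow_chain hkn σ hk _ x hx (by omega),
      build_pow_chain hkn σ hk _ x hx (by omega)]
    have he : n - k + orderOf σ - ((x : ℕ) - k + 1) =
        (n - k - ((x : ℕ) - k + 1)) + orderOf σ := by omega
    rw [he, pow_add, pow_orderOf_eq_one, mul_one]

lemma build_no_smaller (hk : 1 ≤ k) {m' s : ℕ} (hm' : m' < n - k) (hs : 0 < s) :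
    (build hkn σ) ^ (m' + s) ≠ (build hkn σ) ^ m' := by
  intro h
  have hkn' : k < n := by omega
  set x : Fin n := ⟨n - 1, by omega⟩ with hxdef
  have hx : k ≤ (x : ℕ) := by simp [hxdef]; omega
  have hA : ((build hkn σ) ^ m') x = ⟨(x : ℕ) - m', by omega⟩ :=
    build_pow_ge hkn σ m' x (by simp [hxdef]; omega)
  have heq := congrFun h x
  by_cases hc : k ≤ (x : ℕ) - (m' + s)
  · have hB : ((build hkn σ) ^ (m' + s)) x = ⟨(x : ℕ) - (m' + s), by omega⟩ :=
      build_pow_ge hkn σ _ x hc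
    rw [hA, hB] at heq
    have := congrArg Fin.val heq
    simp [hxdef] at this
    omega
  · have hB := build_pow_chain hkn σ hk (m' + s) x hx (by simp [hxdef]; simp [hxdef] at hc; omega)
    rw [hA, hB] at heq
    have := congrArg Fin.val heq
    rw [Fin.coe_castLE] at this
    have hlt := (((σ ^ (m' + s - ((x : ℕ) - k + 1)))) ⟨k - 1, by omega⟩).2
    simp [hxdef] at this hlt
    omega

lemma idx_build (hk : 1 ≤ k) : idx (build hkn σ) = n - k := by
  apply le_antisymm
  · exact idx_le ⟨orderOf σ, orderOf_pos σ, build_pow_stab hkn σ hk⟩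
  · by_contra hlt
    push_neg at hlt
    exact build_no_smaller hkn σ hk hlt (per_pos (build hkn σ)) (pow_idx_add_per (build hkn σ))

lemma per_build (hk : 1 ≤ k) : per (build hkn σ) = orderOf σ := by
  have hchar : ∀ t, (build hkn σ) ^ (n - k + t) = (build hkn σ) ^ (n - k) → orderOf σ ∣ t := by
    intro t h
    have hσ : σ ^ (n - k + t) = σ ^ (n - k) := by
      apply Equiv.ext
      intro z
      have hz : ((Fin.castLE hkn z : Fin n) : ℕ) < k := z.2
      have h1 := congrFun h (Fin.castLE hkn z)
      rw [build_pow_lt hkn σ _ _ hz, build_pow_lt hkn σ _ _ hz] at h1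
      have harg : (⟨((Fin.castLE hkn z : Fin n) : ℕ), hz⟩ : Fin k) = z := Fin.ext (by simp)
      rw [harg] at h1
      have := congrArg Fin.val h1
      rw [Fin.coe_castLE, Fin.coe_castLE] at this
      exact Fin.ext this
    have hσt : σ ^ t = 1 := by
      rw [pow_add] at hσ
      exact mul_left_cancel (hσ.trans (mul_one _).symm)
    exact orderOf_dvd_of_pow_eq_one hσt
  apply le_antisymm
  · refine per_le ⟨orderOf_pos σ, ?_⟩
    rw [idx_build hkn σ hk]
    exact build_pow_stab hkn σ hk
  · have h1 : (build hkn σ) ^ (n - k + per (build hkn σ)) = (build hkn σ) ^ (n - k) := by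
      rw [← idx_build hkn σ hk]
      exact pow_idx_add_per _
    exact Nat.le_of_dvd (per_pos _) (hchar _ h1)

end Build

end Chunk4

end Monogenic

open Monogenic in
theorem card_monogenic_submonoids (n : ℕ) (hn : 1 < n) :
    Nat.card (Quotient (monogenicSetoid n)) = ∑ k ∈ Finset.Icc 1 n, numOrders k := by
  classical
  have hn1 : 1 ≤ n := by omega
  -- the invariant map
  have hresp : ∀ (M N : {N : Submonoid (Function.End (Fin n)) // ∃ a, N = Submonoid.closure {a}}),
      (monogenicSetoid n).r M N →
      (idxAbs ↥M.1, perAbs ↥M.1) = (idxAbs ↥N.1, perAbs ↥N.1) := by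
    rintro M N ⟨e⟩
    exact Prod.ext (idxAbs_congr e) (perAbs_congr e)
  set Φ : Quotient (monogenicSetoid n) → ℕ × ℕ :=
    Quotient.lift (fun N => (idxAbs ↥N.1, perAbs ↥N.1)) hresp with hΦ
  have hΦval : ∀ a : Function.End (Fin n),
      Φ (Quotient.mk (monogenicSetoid n) ⟨Submonoid.closure {a}, ⟨a, rfl⟩⟩) = (idx a, per a) := by
    intro a
    show (idxAbs ↥(Submonoid.closure {a}), perAbs ↥(Submonoid.closure {a})) = (idx a, per a)
    rw [idxAbs_closure, perAbs_closure]
  set V : Finset (ℕ × ℕ) := (Finset.Icc 1 n).biUnion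
    (fun k => (Finset.univ.image fun g : Equiv.Perm (Fin k) => orderOf g).image
      fun r => (n - k, r)) with hV
  have hmem : ∀ q, Φ q ∈ V := by
    refine Quotient.ind ?_
    rintro ⟨N, a, rfl⟩
    have hval : Φ (Quotient.mk (monogenicSetoid n) ⟨Submonoid.closure {a}, ⟨a, rfl⟩⟩) = (idx a, per a) := hΦval a
    rw [hval, hV]
    have hidx : idx a + 1 ≤ n := idx_add_one_le a hn1
    obtain ⟨σ, hσ⟩ := exists_perm_orderOf a hn1
    refine Finset.mem_biUnion.2 ⟨n - idx a, Finset.mem_Icc.2 ⟨by omega, by omega⟩, ?_⟩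
    refine Finset.mem_image.2 ⟨per a, Finset.mem_image.2 ⟨σ, Finset.mem_univ σ, hσ⟩, ?_⟩
    have : n - (n - idx a) = idx a := by omega
    rw [this]
  have hinj : ∀ q₁ q₂, Φ q₁ = Φ q₂ → q₁ = q₂ := by
    refine Quotient.ind₂ ?_
    rintro ⟨N₁, a, rfl⟩ ⟨N₂, b, rfl⟩ h
    rw [hΦval a, hΦval b, Prod.mk.injEq] at h
    exact Quotient.sound ⟨closureIso h.1 h.2⟩
  have hsurj : ∀ v ∈ V, ∃ q, Φ q = v := by
    intro v hv
    rw [hV] at hv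
    obtain ⟨k, hk, hv2⟩ := Finset.mem_biUnion.1 hv
    obtain ⟨r, hr, hv3⟩ := Finset.mem_image.1 hv2
    obtain ⟨σ, -, hσ⟩ := Finset.mem_image.1 hr
    rw [Finset.mem_Icc] at hk
    have hkn : k ≤ n := hk.2
    have hk1 : 1 ≤ k := hk.1
    refine ⟨Quotient.mk (monogenicSetoid n) ⟨Submonoid.closure {build hkn σ}, ⟨build hkn σ, rfl⟩⟩, ?_⟩
    rw [hΦval, idx_build hkn σ hk1, per_build hkn σ hk1, hσ, hv3]
  have e : Quotient (monogenicSetoid n) ≃ ↥V :=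
    Equiv.ofBijective (fun q => ⟨Φ q, hmem q⟩)
      ⟨fun q₁ q₂ h => hinj q₁ q₂ (congrArg Subtype.val h),
       fun v => (hsurj v.1 v.2).imp (fun q hq => Subtype.ext hq)⟩
  rw [Nat.card_congr e, Nat.card_eq_finsetCard, hV]
  rw [Finset.card_biUnion]
  · refine Finset.sum_congr rfl (fun k _ => ?_)
    rw [Finset.card_image_of_injective _ (fun r₁ r₂ h => (Prod.ext_iff.1 h).2)]
    rfl
  · intro k₁ hk₁ k₂ hk₂ hne
    rw [Finset.mem_coe, Finset.mem_Icc] at hk₁ hk₂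
    refine Finset.disjoint_left.2 ?_
    rintro ⟨x1, x2⟩ h1 h2
    obtain ⟨r₁, -, he₁⟩ := Finset.mem_image.1 h1
    obtain ⟨r₂, -, he₂⟩ := Finset.mem_image.1 h2
    have e1 := (Prod.ext_iff.1 he₁).1
    have e2 := (Prod.ext_iff.1 he₂).1
    simp only at e1 e2
    exact hne (by omega)
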